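/- (Approximation Step 1.) Suppose (ϖ,ν) ∈ ℳ(𝒳×𝒳)×ℳ(𝒳×𝒳*) is sub-consistent. Then there exists a sequence (ϖ̂_n, ν̂_n) of pairs such that (i) each (ϖ̂_n, ν̂_n) is consistent, and (ii) (ϖ̂_n, ν̂_n) → (ϖ,ν) in the weak topology as n→∞. -/

import Mathlib

open scoped ENNReal NNReal Classical
open Filter

namespace GWLD

/-! ### The space `𝒳* = ⋃ₙ {n} × 𝒳ⁿ` of offspring configurations -/

/-- `𝒳* = ⋃ₙ {n} × 𝒳ⁿ`, with the discrete topology (it is a countable type). -/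
abbrev XStar (𝒳 : Type) : Type := Σ n : ℕ, Fin n → 𝒳

/-- the multiplicity `m(b,c)` of the symbol `b` in `c = (n, a₁, …, aₙ)`. -/
noncomputable def mult {𝒳 : Type} (b : 𝒳) (c : XStar 𝒳) : ℕ :=
  (Finset.univ.filter fun i : Fin c.1 => c.2 i = b).card

/-! ### Finite rooted planar typed trees -/

/-- A finite rooted planar tree, each vertex carrying a type from `𝒳`. -/
inductive TypedTree (𝒳 : Type) where
  | node : 𝒳 → List (TypedTree 𝒳) → TypedTree 𝒳

namespace TypedTree

variable {𝒳 : Type}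

/-- the type of the root. -/
def rootType : TypedTree 𝒳 → 𝒳
  | node a _ => a

mutual
  /-- the number `|T|` of vertices of the tree. -/
  def size : TypedTree 𝒳 → ℕ
    | node _ ts => 1 + sizeList ts
  def sizeList : List (TypedTree 𝒳) → ℕ
    | [] => 0
    | t :: ts => size t + sizeList ts
end

/-- the element of `𝒳*` recording the number and types of the roots of a list of trees;
`spec ts = C(v)` when `ts` is the list of subtrees hanging off the vertex `v`. -/
def spec (ts : List (TypedTree 𝒳)) : XStar 𝒳 :=
  ⟨ts.length, fun i => rootType (ts.get i)⟩

mutual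
  /-- `offCount t (a,c) = #{v ∈ V : (X(v), C(v)) = (a,c)}`. -/
  noncomputable def offCount : TypedTree 𝒳 → 𝒳 × XStar 𝒳 → ℕ
    | node a ts, p => (if p = (a, spec ts) then 1 else 0) + offCountList ts p
  noncomputable def offCountList : List (TypedTree 𝒳) → 𝒳 × XStar 𝒳 → ℕ
    | [], _ => 0
    | t :: ts, p => offCount t p + offCountList ts p
end

mutual
  /-- `pairCount t (a,b) = #{e ∈ E : (X(e₁), X(e₂)) = (a,b)}`. -/
  noncomputable def pairCount : TypedTree 𝒳 → 𝒳 × 𝒳 → ℕ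
    | node a ts, p =>
        (ts.map fun s => if p = (a, rootType s) then 1 else 0).sum + pairCountList ts p
  noncomputable def pairCountList : List (TypedTree 𝒳) → 𝒳 × 𝒳 → ℕ
    | [], _ => 0
    | t :: ts, p => pairCount t p + pairCountList ts p
end

mutual
  /-- `∏_{v ∈ V} ℚ{C(v) | X(v)}`. -/
  noncomputable def treeWeight (Q : 𝒳 → XStar 𝒳 → ℝ) : TypedTree 𝒳 → ℝ
    | node a ts => Q a (spec ts) * treeWeightList Q ts
  noncomputable def treeWeightList (Q : 𝒳 → XStar 𝒳 → ℝ) : List (TypedTree 𝒳) → ℝ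
    | [] => 1
    | t :: ts => treeWeight Q t * treeWeightList Q ts
end

end TypedTree

open TypedTree

variable {𝒳 : Type}

/-! ### Empirical measures -/

/-- the empirical offspring measure `M_X`. -/
noncomputable def MX (t : TypedTree 𝒳) : 𝒳 × XStar 𝒳 → ℝ :=
  fun p => (offCount t p : ℝ) / (size t : ℝ)

/-- the empirical pair measure `L̃_X` (normalised by the number of vertices). -/
noncomputable def LtX (t : TypedTree 𝒳) : 𝒳 × 𝒳 → ℝ :=
  fun p => (pairCount t p : ℝ) / (size t : ℝ)

/-- the empirical pair measure `L_X` (normalised by the number `|T| - 1` of edges). -/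
noncomputable def LX (t : TypedTree 𝒳) : 𝒳 × 𝒳 → ℝ :=
  fun p => (pairCount t p : ℝ) / ((size t : ℝ) - 1)

/-! ### The law of a multitype Galton-Watson tree and conditioning on the total size -/

/-- the probability that the multitype Galton-Watson tree with initial law `μ` and
offspring kernel `Q` produces exactly the typed tree `t`. -/
noncomputable def gwLaw (μ : 𝒳 → ℝ) (Q : 𝒳 → XStar 𝒳 → ℝ) (t : TypedTree 𝒳) : ℝ :=
  μ (rootType t) * treeWeight Q t

/-- `P{|T| = n}`. -/
noncomputable def partSum (μ : 𝒳 → ℝ) (Q : 𝒳 → XStar 𝒳 → ℝ) (n : ℕ) : ℝ :=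
  ∑' t : TypedTree 𝒳, if size t = n then gwLaw μ Q t else 0

/-- `P{X ∈ A | |T| = n}`. -/
noncomputable def condProb (μ : 𝒳 → ℝ) (Q : 𝒳 → XStar 𝒳 → ℝ)
    (A : Set (TypedTree 𝒳)) (n : ℕ) : ℝ :=
  (∑' t : TypedTree 𝒳, if size t = n ∧ t ∈ A then gwLaw μ Q t else 0) / partSum μ Q n

/-- `n → ∞` along those `n` for which `P{|T| = n} > 0`. -/
noncomputable def condFilter (μ : 𝒳 → ℝ) (Q : 𝒳 → XStar 𝒳 → ℝ) : Filter ℕ :=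
  Filter.atTop ⊓ Filter.principal {n : ℕ | 0 < partSum μ Q n}

/-! ### Large deviation principles -/

/-- extended logarithm, `elog x = -∞` for `x ≤ 0`. -/
noncomputable def elog (x : ℝ) : EReal := if x ≤ 0 then (⊥ : EReal) else ((Real.log x : ℝ) : EReal)

/-- A family `P n` of (conditional) probabilities on a topological space `S` satisfies a
large deviation principle with speed `n`, along the filter `L`, with rate function `I`. -/
def HasLDP {S : Type*} [TopologicalSpace S] (P : ℕ → Set S → ℝ) (L : Filter ℕ)
    (I : S → ℝ≥0∞) : Prop :=
  (∀ F : Set S, IsClosed F →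
      Filter.limsup (fun n : ℕ => (((n : ℝ)⁻¹ : ℝ) : EReal) * elog (P n F)) L
        ≤ -(⨅ x ∈ F, (I x : EReal))) ∧
  (∀ G : Set S, IsOpen G →
      -(⨅ x ∈ G, (I x : EReal))
        ≤ Filter.liminf (fun n : ℕ => (((n : ℝ)⁻¹ : ℝ) : EReal) * elog (P n G)) L)

/-- a good rate function: lower semicontinuous with compact sublevel sets. -/
def IsGoodRate {S : Type*} [TopologicalSpace S] (I : S → ℝ≥0∞) : Prop :=
  LowerSemicontinuous I ∧ ∀ c : ℝ≥0∞, c ≠ ⊤ → IsCompact {x : S | I x ≤ c}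

/-! ### Relative entropy -/

/-- relative entropy `H(ν ‖ μ)` of two (probability) mass functions on a countable set,
written via `φ(x) = x log x - x + 1` so that all summands are nonnegative. -/
noncomputable def relEnt {α : Type*} (ν μ : α → ℝ) : ℝ≥0∞ :=
  if ∀ x, μ x = 0 → ν x = 0 then
    ∑' x, ENNReal.ofReal (ν x * Real.log (ν x / μ x) - ν x + μ x)
  else ⊤

/-! ### Probability vectors and offspring kernels -/

/-- a probability mass function. -/
def IsProbVec {α : Type*} (μ : α → ℝ) : Prop := (∀ a, 0 ≤ μ a) ∧ HasSum μ 1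

/-- an offspring transition kernel from `𝒳` to `𝒳*`. -/
def IsKernel (Q : 𝒳 → XStar 𝒳 → ℝ) : Prop :=
  (∀ a c, 0 ≤ Q a c) ∧ ∀ a, HasSum (Q a) 1

/-- the offspring numbers have finite second moment under `Q{·|a}` for every `a`. -/
def FiniteSecondMoment (Q : 𝒳 → XStar 𝒳 → ℝ) : Prop :=
  ∀ a, Summable fun c : XStar 𝒳 => ((c.1 : ℝ)) ^ 2 * Q a c

/-! ### The mean matrix, weak irreducibility and criticality -/

/-- the mean matrix `A(a,b) = Σ_c ℚ{c|b} m(a,c)`, valued in `[0,∞]`. -/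
noncomputable def AmatE [Fintype 𝒳] (Q : 𝒳 → XStar 𝒳 → ℝ) : Matrix 𝒳 𝒳 ℝ≥0∞ :=
  Matrix.of fun a b => ∑' c : XStar 𝒳, (mult a c : ℝ≥0∞) * ENNReal.ofReal (Q b c)

/-- `A*(a,b) = Σ_{k ≥ 1} A^k(a,b) ∈ [0,∞]`. -/
noncomputable def Astar [Fintype 𝒳] [DecidableEq 𝒳] (Q : 𝒳 → XStar 𝒳 → ℝ) (a b : 𝒳) : ℝ≥0∞ :=
  ∑' k : ℕ, (AmatE Q ^ (k + 1)) a b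

/-- the multitype Galton-Watson tree with offspring kernel `Q` is weakly irreducible:
`𝒳` splits into recurrent and transient states as prescribed, and the number of
transient offspring is uniformly bounded under `Q`. -/
def WeaklyIrreducibleGW [Fintype 𝒳] [DecidableEq 𝒳] (Q : 𝒳 → XStar 𝒳 → ℝ) : Prop :=
  ∃ Xr Xt : Set 𝒳, Xr.Nonempty ∧ Disjoint Xr Xt ∧ Xr ∪ Xt = Set.univ ∧
    (∀ a b, b ∈ Xr → 0 < Astar Q a b) ∧
    (∀ a b, b ∈ Xt → (a = b ∨ a ∈ Xr) → Astar Q a b = 0) ∧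
    ∃ C : ℕ, ∀ a c, Q a c ≠ 0 → (∑ b : 𝒳, if b ∈ Xt then mult b c else 0) ≤ C

/-- the mean matrix as a real matrix (meaningful when the entries are finite). -/
noncomputable def Amat [Fintype 𝒳] (Q : 𝒳 → XStar 𝒳 → ℝ) : Matrix 𝒳 𝒳 ℝ :=
  Matrix.of fun a b => ∑' c : XStar 𝒳, (mult a c : ℝ) * Q b c

/-- `r` is the Perron-Frobenius eigenvalue of the nonnegative matrix `M` : it is an
eigenvalue with a nonnegative eigenvector dominating the modulus of every eigenvalue. -/
def IsPerronRoot [Fintype 𝒳] [DecidableEq 𝒳] (M : Matrix 𝒳 𝒳 ℝ) (r : ℝ) : Prop :=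
  (∃ v : 𝒳 → ℝ, v ≠ 0 ∧ (∀ a, 0 ≤ v a) ∧ M.mulVec v = r • v) ∧
  ∀ z : ℂ, (M.map (algebraMap ℝ ℂ)).charpoly.IsRoot z → ‖z‖ ≤ r

/-- criticality: the Perron-Frobenius eigenvalue of the mean matrix is `1`. -/
def CriticalGW [Fintype 𝒳] [DecidableEq 𝒳] (Q : 𝒳 → XStar 𝒳 → ℝ) : Prop :=
  IsPerronRoot (Amat Q) 1

/-! ### Spaces of measures (weak topology = topology of pointwise convergence) -/

/-- `ℳ̃(𝒳×𝒳)`: finite (nonnegative) measures on `𝒳 × 𝒳`. -/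
def Mpair (𝒳 : Type) : Set ((𝒳 × 𝒳) → ℝ) := {ϖ | ∀ p, 0 ≤ ϖ p}

/-- `ℳ(𝒳×𝒳*)`: probability measures `ν` on `𝒳 × 𝒳*` with `∫ n dν < ∞`. -/
def Mstar (𝒳 : Type) : Set ((𝒳 × XStar 𝒳) → ℝ) :=
  {ν | (∀ p, 0 ≤ ν p) ∧ HasSum ν 1 ∧ Summable fun p : 𝒳 × XStar 𝒳 => (p.2.1 : ℝ) * ν p}

/-- `ℳ(𝒳×𝒳_k*)`: probability measures on `𝒳 × 𝒳*` carried by `𝒳 × 𝒳_k*`. -/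
def MstarK (𝒳 : Type) (k : ℕ) : Set ((𝒳 × XStar 𝒳) → ℝ) :=
  {ν | ν ∈ Mstar 𝒳 ∧ ∀ p : 𝒳 × XStar 𝒳, k < p.2.1 → ν p = 0}

/-- `ℳ(𝒳×𝒳)` as probability measures: the empirical pair measure lives here. -/
def Mprob2 (𝒳 : Type) [Fintype 𝒳] : Set ((𝒳 × 𝒳) → ℝ) :=
  {μ | (∀ p, 0 ≤ μ p) ∧ ∑ p : 𝒳 × 𝒳, μ p = 1}

/-- the `𝒳`-marginal `ν₁` of a measure on `𝒳 × 𝒳*`. -/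
noncomputable def nu1 (ν : (𝒳 × XStar 𝒳) → ℝ) : 𝒳 → ℝ := fun a => ∑' c : XStar 𝒳, ν (a, c)

/-- the second marginal `ϖ₂` of a measure on `𝒳 × 𝒳`. -/
noncomputable def pi2 [Fintype 𝒳] (ϖ : (𝒳 × 𝒳) → ℝ) : 𝒳 → ℝ := fun b => ∑ a : 𝒳, ϖ (a, b)

/-- `(ϖ, ν)` is sub-consistent: `ϖ(a,b) ≥ Σ_c m(b,c) ν(a,c)` for all `a, b`. -/
def SubConsistent (ϖ : (𝒳 × 𝒳) → ℝ) (ν : (𝒳 × XStar 𝒳) → ℝ) : Prop :=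
  ∀ a b : 𝒳, (∑' c : XStar 𝒳, (mult b c : ℝ) * ν (a, c)) ≤ ϖ (a, b)

/-- `(ϖ, ν)` is consistent: `ϖ(a,b) = Σ_c m(b,c) ν(a,c)` for all `a, b`. -/
def Consistent (ϖ : (𝒳 × 𝒳) → ℝ) (ν : (𝒳 × XStar 𝒳) → ℝ) : Prop :=
  ∀ a b : 𝒳, (∑' c : XStar 𝒳, (mult b c : ℝ) * ν (a, c)) = ϖ (a, b)

/-- the measure `ν₁ ⊗ ℚ (a,c) = ν₁(a) ℚ{c|a}` on `𝒳 × 𝒳*`. -/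
noncomputable def prodQ (ν1f : 𝒳 → ℝ) (Q : 𝒳 → XStar 𝒳 → ℝ) : (𝒳 × XStar 𝒳) → ℝ :=
  fun p => ν1f p.1 * Q p.1 p.2

/-! ### The rate functions -/

/-- the rate function `J` of Theorem 2.1. -/
noncomputable def Jrate [Fintype 𝒳] (Q : 𝒳 → XStar 𝒳 → ℝ)
    (ϖ : (𝒳 × 𝒳) → ℝ) (ν : (𝒳 × XStar 𝒳) → ℝ) : ℝ≥0∞ :=
  if SubConsistent ϖ ν ∧ pi2 ϖ = nu1 ν then relEnt ν (prodQ (nu1 ν) Q) else ⊤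

/-- the rate function `J_k` of Theorem 2.3 (consistency instead of sub-consistency). -/
noncomputable def JrateC [Fintype 𝒳] (Q : 𝒳 → XStar 𝒳 → ℝ)
    (ϖ : (𝒳 × 𝒳) → ℝ) (ν : (𝒳 × XStar 𝒳) → ℝ) : ℝ≥0∞ :=
  if Consistent ϖ ν ∧ pi2 ϖ = nu1 ν then relEnt ν (prodQ (nu1 ν) Q) else ⊤

/-- the rate function `K` of Corollary 2.2. -/
noncomputable def Krate (Q : 𝒳 → XStar 𝒳 → ℝ) (ν : (𝒳 × XStar 𝒳) → ℝ) : ℝ≥0∞ :=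
  if ∀ b : 𝒳, (∑' p : 𝒳 × XStar 𝒳, (mult b p.2 : ℝ) * ν p) ≤ nu1 ν b then
    relEnt ν (prodQ (nu1 ν) Q)
  else ⊤

/-- the rate function `J̃`, defined on sub-consistent pairs. -/
noncomputable def Jtilde [Fintype 𝒳] (Q : 𝒳 → XStar 𝒳 → ℝ)
    (ϖ : (𝒳 × 𝒳) → ℝ) (ν : (𝒳 × XStar 𝒳) → ℝ) : ℝ≥0∞ :=
  if pi2 ϖ = nu1 ν then relEnt ν (prodQ (nu1 ν) Q) else ⊤

/-! ### Events -/

/-- the event `{(L̃_X, M_X) ∈ F}` for `F` a set of pairs of measures. -/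
def evPairOff (F : Set (↥(Mpair 𝒳) × ↥(Mstar 𝒳))) : Set (TypedTree 𝒳) :=
  {t | ∃ x ∈ F, x.1.1 = LtX t ∧ x.2.1 = MX t}

/-- the event `{(L̃_X, M_X) ∈ F}` for `F` a set of pairs with second component in `ℳ(𝒳×𝒳_k*)`. -/
def evPairOffK (k : ℕ) (F : Set (↥(Mpair 𝒳) × ↥(MstarK 𝒳 k))) : Set (TypedTree 𝒳) :=
  {t | ∃ x ∈ F, x.1.1 = LtX t ∧ x.2.1 = MX t}

/-- the event `{M_X ∈ F}`. -/
def evOff (F : Set ↥(Mstar 𝒳)) : Set (TypedTree 𝒳) := {t | ∃ x ∈ F, x.1 = MX t}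

/-- the event `{L_X ∈ F}`. -/
def evPair [Fintype 𝒳] (F : Set ↥(Mprob2 𝒳)) : Set (TypedTree 𝒳) := {t | ∃ x ∈ F, x.1 = LX t}

/-- `ℳ_s`, the (closed) set of sub-consistent pairs, as a subspace. -/
def Msub (𝒳 : Type) : Set (↥(Mpair 𝒳) × ↥(Mstar 𝒳)) := {x | SubConsistent x.1.1 x.2.1}

/-- `ℳ_{c,k}`, the (closed) set of consistent pairs, as a subspace. -/
def MsubK (𝒳 : Type) (k : ℕ) : Set (↥(Mpair 𝒳) × ↥(MstarK 𝒳 k)) := {x | Consistent x.1.1 x.2.1}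

/-- the event `{(L̃_X, M_X) ∈ F}` for `F ⊆ ℳ_s`. -/
def evPairOffSub (F : Set ↥(Msub 𝒳)) : Set (TypedTree 𝒳) :=
  {t | ∃ x ∈ F, x.1.1.1 = LtX t ∧ x.1.2.1 = MX t}

/-- the event `{(L̃_X, M_X) ∈ F}` for `F ⊆ ℳ_{c,k}`. -/
def evPairOffSubK (k : ℕ) (F : Set ↥(MsubK 𝒳 k)) : Set (TypedTree 𝒳) :=
  {t | ∃ x ∈ F, x.1.1.1 = LtX t ∧ x.1.2.1 = MX t}

/-! ### Markov chains indexed by Galton-Watson trees -/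

/-- the offspring kernel of a Markov chain with transition kernel `Q` indexed by a
Galton-Watson tree with offspring law `p`: `ℚ{c|b} = p(n) ∏ᵢ Q{aᵢ|b}`. -/
noncomputable def mcKernel (p : ℕ → ℝ) (Q : 𝒳 → 𝒳 → ℝ) : 𝒳 → XStar 𝒳 → ℝ :=
  fun b c => p c.1 * ∏ i : Fin c.1, Q b (c.2 i)

/-- irreducibility of a Markovian transition kernel on `𝒳`. -/
def IrreducibleKernel [Fintype 𝒳] [DecidableEq 𝒳] (Q : 𝒳 → 𝒳 → ℝ) : Prop :=
  ∀ a b : 𝒳, ∃ n : ℕ, 0 < ((Matrix.of Q) ^ (n + 1)) a b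

/-- first marginal of a measure on `𝒳 × 𝒳`. -/
noncomputable def mu1m [Fintype 𝒳] (μ : (𝒳 × 𝒳) → ℝ) : 𝒳 → ℝ := fun a => ∑ b : 𝒳, μ (a, b)

/-- second marginal of a measure on `𝒳 × 𝒳`. -/
noncomputable def mu2m [Fintype 𝒳] (μ : (𝒳 × 𝒳) → ℝ) : 𝒳 → ℝ := fun b => ∑ a : 𝒳, μ (a, b)

/-- the Cramér transform `I_p(x) = sup_λ {λx - log Σₙ p(n) e^{λn}}` of an offspring law,
as an element of `[0,∞]` (the log-moment generating function being `+∞`,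
i.e. the bracket being `-∞`, where the series diverges). -/
noncomputable def Ip (p : ℕ → ℝ) (x : ℝ) : ℝ≥0∞ :=
  ⨆ lam : ℝ,
    if Summable (fun n : ℕ => p n * Real.exp (lam * n)) then
      ENNReal.ofReal (lam * x - Real.log (∑' n : ℕ, p n * Real.exp (lam * n)))
    else 0

/-- the log-moment generating function `Λ_p(λ)`, valued in `(-∞, ∞]`. -/
noncomputable def logMgf (p : ℕ → ℝ) (lam : ℝ) : EReal :=
  if Summable (fun n : ℕ => p n * Real.exp (lam * n)) then
    ((Real.log (∑' n : ℕ, p n * Real.exp (lam * n)) : ℝ) : EReal)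
  else ⊤

/-- the rate function `I` of Theorem 2.5. -/
noncomputable def Irate [Fintype 𝒳] (p : ℕ → ℝ) (Q : 𝒳 → 𝒳 → ℝ) (μ : (𝒳 × 𝒳) → ℝ) : ℝ≥0∞ :=
  if ∀ a : 𝒳, mu2m μ a = 0 → mu1m μ a = 0 then
    relEnt μ (fun q : 𝒳 × 𝒳 => mu1m μ q.1 * Q q.1 q.2)
      + ∑ a : 𝒳, ENNReal.ofReal (mu2m μ a) * Ip p (mu1m μ a / mu2m μ a)
  else ⊤

/-! ### The variational upper-bound functional `Ĵ` -/

/-- bounded functions on `𝒳 × 𝒳*`. -/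
def BddFun {α : Type*} (g : α → ℝ) : Prop := ∃ M : ℝ, ∀ x, |g x| ≤ M

/-- `U_g(a) = log Σ_c e^{g(a,c)} ℚ{c|a}`. -/
noncomputable def Ug (Q : 𝒳 → XStar 𝒳 → ℝ) (g : (𝒳 × XStar 𝒳) → ℝ) (a : 𝒳) : ℝ :=
  Real.log (∑' c : XStar 𝒳, Real.exp (g (a, c)) * Q a c)

/-- `Ĵ(ϖ,ν) = sup_{g bounded} { ∫ g dν - ∫ U_g(b) ϖ(da,db) }`. -/
noncomputable def Jhat [Fintype 𝒳] (Q : 𝒳 → XStar 𝒳 → ℝ)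
    (ϖ : (𝒳 × 𝒳) → ℝ) (ν : (𝒳 × XStar 𝒳) → ℝ) : ℝ≥0∞ :=
  ⨆ (g : (𝒳 × XStar 𝒳) → ℝ) (_ : BddFun g),
    ENNReal.ofReal ((∑' p : 𝒳 × XStar 𝒳, g p * ν p) - ∑ q : 𝒳 × 𝒳, Ug Q g q.2 * ϖ q)

/-! ### Truncation, conditional kernels, total variation -/

/-- `‖ν‖_k = ν(𝒳 × 𝒳_k*)`. -/
noncomputable def normK (k : ℕ) (ν : (𝒳 × XStar 𝒳) → ℝ) : ℝ :=
  ∑' p : 𝒳 × XStar 𝒳, if p.2.1 ≤ k then ν p else 0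

/-- `ν_k`, the normalised restriction of `ν` to `𝒳 × 𝒳_k*`. -/
noncomputable def restrictK (k : ℕ) (ν : (𝒳 × XStar 𝒳) → ℝ) : (𝒳 × XStar 𝒳) → ℝ :=
  fun p => if p.2.1 ≤ k then ν p / normK k ν else 0

/-- `ℚ{𝒳_k* | a}`. -/
noncomputable def QmassK (Q : 𝒳 → XStar 𝒳 → ℝ) (k : ℕ) (a : 𝒳) : ℝ :=
  ∑' c : XStar 𝒳, if c.1 ≤ k then Q a c else 0

/-- the conditional offspring kernel `ℚ_k{c|a} = ℚ{c|a} / ℚ{𝒳_k*|a}` on `𝒳_k*`. -/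
noncomputable def Qcond (Q : 𝒳 → XStar 𝒳 → ℝ) (k : ℕ) : 𝒳 → XStar 𝒳 → ℝ :=
  fun a c => if c.1 ≤ k then Q a c / QmassK Q k a else 0

/-- `ϖ_k(a,b) = Σ_{c ∈ 𝒳_k*} m(b,c) ν_k(a,c)`. -/
noncomputable def piK (k : ℕ) (ν : (𝒳 × XStar 𝒳) → ℝ) : (𝒳 × 𝒳) → ℝ :=
  fun q => ∑' c : XStar 𝒳, (mult q.2 c : ℝ) * restrictK k ν (q.1, c)

/-- the total variation metric `d(ν,ν̃) = (1/2) Σ |ν - ν̃|`. -/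
noncomputable def tvDist {α : Type*} (ν ν' : α → ℝ) : ℝ := (1 / 2) * ∑' x, |ν x - ν' x|

/-- the pairing `⟨f, ν⟩ = Σ f dν`, valued in `[-∞,∞]`
(defined as the difference of the positive and negative parts). -/
noncomputable def pairE {α : Type*} (f ν : α → ℝ) : EReal :=
  ((∑' x, ENNReal.ofReal (f x * ν x) : ℝ≥0∞) : EReal)
    - ((∑' x, ENNReal.ofReal (-(f x * ν x)) : ℝ≥0∞) : EReal)

/-- `f^{(0,q]} = 1_{ν₁⊗ℚ ≥ ν > 0} log (ν / ν₁⊗ℚ)`. -/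
noncomputable def f0q (Q : 𝒳 → XStar 𝒳 → ℝ) (ν : (𝒳 × XStar 𝒳) → ℝ) : (𝒳 × XStar 𝒳) → ℝ :=
  fun p => if 0 < ν p ∧ ν p ≤ prodQ (nu1 ν) Q p then Real.log (ν p / prodQ (nu1 ν) Q p) else 0

/-- `f^{(q,1]} = 1_{1 ≥ ν > ν₁⊗ℚ} log (ν / ν₁⊗ℚ)`. -/
noncomputable def fq1 (Q : 𝒳 → XStar 𝒳 → ℝ) (ν : (𝒳 × XStar 𝒳) → ℝ) : (𝒳 × XStar 𝒳) → ℝ :=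
  fun p => if prodQ (nu1 ν) Q p < ν p ∧ ν p ≤ 1 then Real.log (ν p / prodQ (nu1 ν) Q p) else 0

/-- `f_k = 1_{ν_k > 0} log (ν_k / (ν_k)₁⊗ℚ_k)`. -/
noncomputable def fres (Q : 𝒳 → XStar 𝒳 → ℝ) (k : ℕ) (ν : (𝒳 × XStar 𝒳) → ℝ) :
    (𝒳 × XStar 𝒳) → ℝ :=
  fun p => if 0 < restrictK k ν p then
    Real.log (restrictK k ν p / prodQ (nu1 (restrictK k ν)) (Qcond Q k) p) else 0

/-! ### Product laws on `𝒳*` and on `𝒳ⁿ` -/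

/-- the offspring law `q(c) = p(n) ∏ᵢ q̂(aᵢ)` on `𝒳*`. -/
noncomputable def qProd (p : ℕ → ℝ) (qhat : 𝒳 → ℝ) : XStar 𝒳 → ℝ :=
  fun c => p c.1 * ∏ i : Fin c.1, qhat (c.2 i)

/-- the product measure `q̂ⁿ` on `𝒳ⁿ`. -/
noncomputable def prodM (qhat : 𝒳 → ℝ) (n : ℕ) : (Fin n → 𝒳) → ℝ := fun y => ∏ i, qhat (y i)

/-- the `i`-th marginal `v_{n,i}` of a measure on `𝒳ⁿ`. -/
noncomputable def marginal [Fintype 𝒳] {n : ℕ} (v : (Fin n → 𝒳) → ℝ) (i : Fin n) : 𝒳 → ℝ :=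
  fun b => ∑ y : Fin n → 𝒳, if y i = b then v y else 0

/-- the tilted law `s_λ(n) = p(n) e^{λn - Λ_p(λ)}`. -/
noncomputable def tilted (p : ℕ → ℝ) (lam : ℝ) : ℕ → ℝ :=
  fun n => p n * Real.exp (lam * n - Real.log (∑' m : ℕ, p m * Real.exp (lam * m)))

/-- `n × M_X[N > B]`: the number of vertices with more than `B` children. -/
noncomputable def bigCount (t : TypedTree 𝒳) (B : ℕ) : ℝ :=
  ∑' p : 𝒳 × XStar 𝒳, if B < p.2.1 then (TypedTree.offCount t p : ℝ) else 0


lemma exists_config' {𝒳 : Type} [Fintype 𝒳] (k : 𝒳 → ℕ) :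
    ∃ c : XStar 𝒳, ∀ b, mult b c = k b := by
  classical
  set L : List 𝒳 := Finset.univ.toList.flatMap (fun b => List.replicate (k b) b) with hL
  refine ⟨⟨L.length, fun i => L.get i⟩, fun b => ?_⟩
  have h1 : mult b ⟨L.length, fun i => L.get i⟩
      = (Finset.univ.filter fun i : Fin L.length => L.get i = b).card := by
    simp [mult]
  have h2 : (Finset.univ.filter fun i : Fin L.length => L.get i = b).card = L.count b := by
    have := Fin.card_filter_univ_eq_vector_get_eq_count b (⟨L, rfl⟩ : List.Vector 𝒳 L.length)
    exact this
  rw [h1, h2, hL, List.count_flatMap]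
  have h3 : ∀ a : 𝒳, (List.replicate (k a) a).count b = if b = a then k a else 0 :=
    fun a => by
    rw [List.count_replicate]
    by_cases h : a = b
    · subst h; simp
    · rw [if_neg (by simpa using h), if_neg (fun hh => h hh.symm)]
  simp only [Function.comp_def, h3]
  rw [show (Finset.univ.toList.map fun a => if b = a then k a else 0).sum
      = Finset.univ.sum (fun a => if b = a then k a else 0) from Finset.sum_map_toList _ _]
  simp

set_option maxHeartbeats 2000000 in
/-- **Lemma 3.7** (Approximation Step 1). Every sub-consistent pair `(ϖ, ν)` is the
(weak) limit of a sequence of consistent pairs `(ϖ̂_n, ν̂_n)`. -/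
theorem stmt11 {𝒳 : Type} [Fintype 𝒳] [Nonempty 𝒳]
    (ϖ : (𝒳 × 𝒳) → ℝ) (ν : (𝒳 × XStar 𝒳) → ℝ)
    (hϖ : ϖ ∈ Mpair 𝒳) (hν : ν ∈ Mstar 𝒳) (hsub : SubConsistent ϖ ν) :
    ∃ (w : ℕ → (𝒳 × 𝒳) → ℝ) (v : ℕ → (𝒳 × XStar 𝒳) → ℝ),
      (∀ n, w n ∈ Mpair 𝒳 ∧ v n ∈ Mstar 𝒳 ∧ Consistent (w n) (v n)) ∧
      Filter.Tendsto w Filter.atTop (nhds ϖ) ∧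
      Filter.Tendsto v Filter.atTop (nhds ν) := by
  classical
  obtain ⟨hν0, hν1, hνm⟩ := hν
  set K : ℝ := (Fintype.card 𝒳 : ℝ) with hK
  have hKpos : 0 < K := by
    rw [hK]; exact_mod_cast Fintype.card_pos
  have hsec : ∀ a : 𝒳, Summable fun c : XStar 𝒳 => (c.1 : ℝ) * ν (a, c) := by
    intro a
    have hinj : Function.Injective (fun c : XStar 𝒳 => ((a, c) : 𝒳 × XStar 𝒳)) :=
      fun c c' h => congrArg Prod.snd h
    have h := hνm.comp_injective hinj
    exact h.congr (fun c => rfl)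
  have hmle : ∀ (b : 𝒳) (c : XStar 𝒳), (mult b c : ℝ) ≤ (c.1 : ℝ) := by
    intro b c
    have : mult b c ≤ c.1 := (Finset.card_filter_le _ _).trans_eq (by simp)
    exact_mod_cast this
  have hS : ∀ a b : 𝒳, Summable fun c : XStar 𝒳 => (mult b c : ℝ) * ν (a, c) := by
    intro a b
    exact Summable.of_nonneg_of_le
      (fun c => mul_nonneg (Nat.cast_nonneg _) (hν0 _))
      (fun c => mul_le_mul_of_nonneg_right (hmle b c) (hν0 _)) (hsec a)
  set πh : 𝒳 → 𝒳 → ℝ := fun a b => ∑' c : XStar 𝒳, (mult b c : ℝ) * ν (a, c) with hπh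
  have hπhle : ∀ a b, πh a b ≤ ϖ (a, b) := hsub
  set d : 𝒳 → 𝒳 → ℝ := fun a b => ϖ (a, b) - πh a b with hd
  have hd0 : ∀ a b, 0 ≤ d a b := fun a b => sub_nonneg.2 (hπhle a b)
  choose C hC using fun (n : ℕ) (a : 𝒳) =>
    exists_config' (𝒳 := 𝒳) (fun b => ⌈((n : ℝ) + 1) * K * d a b⌉₊)
  set θ : ℕ → ℝ := fun n => ((n : ℝ) + 1)⁻¹ with hθ
  have hθpos : ∀ n, 0 < θ n := fun n => by positivity
  have hθle : ∀ n, θ n ≤ 1 := by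
    intro n
    rw [hθ]
    rw [inv_le_one_iff₀]
    right; linarith [Nat.cast_nonneg (α := ℝ) n]
  have hθ0 : Filter.Tendsto θ Filter.atTop (nhds 0) := by
    have := tendsto_one_div_add_atTop_nhds_zero_nat (𝕜 := ℝ)
    simpa [hθ, one_div] using this
  set g : ℕ → (𝒳 × XStar 𝒳) → ℝ := fun n p => if p.2 = C n p.1 then θ n / K else 0 with hg
  have hg0 : ∀ n p, 0 ≤ g n p := by
    intro n p; simp only [hg]
    split
    · positivity
    · exact le_refl 0
  set v : ℕ → (𝒳 × XStar 𝒳) → ℝ := fun n p => (1 - θ n) * ν p + g n p with hv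
  have hv0 : ∀ n p, 0 ≤ v n p :=
    fun n p => add_nonneg (mul_nonneg (by linarith [hθle n]) (hν0 p)) (hg0 n p)
  -- g as a finite sum of point masses
  have hgsum : ∀ (n : ℕ) (p : 𝒳 × XStar 𝒳),
      g n p = ∑ a : 𝒳, (if p = (a, C n a) then θ n / K else 0) := by
    intro n p
    by_cases h : p.2 = C n p.1
    · have hp : p = (p.1, C n p.1) := by
        obtain ⟨p1, p2⟩ := p; simpa using h
      simp only [hg, if_pos h]
      rw [Finset.sum_eq_single p.1]
      · rw [if_pos hp]
      · intro a _ ha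
        rw [if_neg (fun hh => ha (congrArg Prod.fst hh).symm)]
      · intro h'; exact absurd (Finset.mem_univ _) h'
    · simp only [hg, if_neg h]
      refine (Finset.sum_eq_zero ?_).symm
      intro a _
      rw [if_neg]
      rintro rfl
      exact h rfl
  have hgHasSum : ∀ n : ℕ, HasSum (g n) (θ n) := by
    intro n
    have h1 : HasSum (fun p : 𝒳 × XStar 𝒳 => ∑ a : 𝒳, (if p = (a, C n a) then θ n / K else 0))
        (∑ a : 𝒳, θ n / K) :=
      hasSum_sum fun a _ => hasSum_ite_eq (a, C n a) (θ n / K)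
    have h2 : (∑ a : 𝒳, θ n / K) = θ n := by
      rw [Finset.sum_const, Finset.card_univ, nsmul_eq_mul, ← hK]
      field_simp
    rw [← h2]
    exact h1.congr_fun fun p => (hgsum n p)
  have hvMstar : ∀ n, v n ∈ Mstar 𝒳 := by
    intro n
    refine ⟨hv0 n, ?_, ?_⟩
    · have := (hν1.mul_left (1 - θ n)).add (hgHasSum n)
      simpa using this
    · have e : (fun p : 𝒳 × XStar 𝒳 => (p.2.1 : ℝ) * v n p)
          = (fun p : 𝒳 × XStar 𝒳 => (1 - θ n) * ((p.2.1 : ℝ) * ν p))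
            + fun p : 𝒳 × XStar 𝒳 =>
              ∑ a : 𝒳, (if p = (a, C n a) then ((C n a).1 : ℝ) * (θ n / K) else 0) := by
        funext p
        have e2 : (p.2.1 : ℝ) * g n p
            = ∑ a : 𝒳, (if p = (a, C n a) then ((C n a).1 : ℝ) * (θ n / K) else 0) := by
          rw [hgsum n p, Finset.mul_sum]
          refine Finset.sum_congr rfl fun a _ => ?_
          by_cases h : p = (a, C n a)
          · rw [if_pos h, if_pos h, h]
          · rw [if_neg h, if_neg h, mul_zero]
        simp only [Pi.add_apply, hv, ← e2]
        ring
      rw [e]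
      exact ((hνm.mul_left _).add
        (summable_sum fun a _ => (hasSum_ite_eq (a, C n a) _).summable))
  set w : ℕ → (𝒳 × 𝒳) → ℝ :=
    fun n q => ∑' c : XStar 𝒳, (mult q.2 c : ℝ) * v n (q.1, c) with hw
  have hSv : ∀ (n : ℕ) (a b : 𝒳),
      Summable fun c : XStar 𝒳 => if c = C n a then (mult b (C n a) : ℝ) * (θ n / K) else 0 :=
    fun n a b => (hasSum_ite_eq (C n a) _).summable
  have hwval : ∀ (n : ℕ) (a b : 𝒳),
      w n (a, b) = (1 - θ n) * πh a b
        + (⌈((n : ℝ) + 1) * K * d a b⌉₊ : ℝ) * (θ n / K) := by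
    intro n a b
    have e1 : (fun c : XStar 𝒳 => (mult b c : ℝ) * v n (a, c))
        = (fun c : XStar 𝒳 => (1 - θ n) * ((mult b c : ℝ) * ν (a, c)))
          + fun c : XStar 𝒳 => if c = C n a then (mult b (C n a) : ℝ) * (θ n / K) else 0 := by
      funext c
      simp only [Pi.add_apply, hv, hg]
      by_cases h : c = C n a
      · subst h; simp; ring
      · simp only [if_neg h]
        ring
    have hwnb : w n (a, b) = ∑' c : XStar 𝒳, (mult b c : ℝ) * v n (a, c) := rfl
    have e2 : (∑' c : XStar 𝒳, (mult b c : ℝ) * v n (a, c))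
        = ∑' c : XStar 𝒳, ((1 - θ n) * ((mult b c : ℝ) * ν (a, c))
            + (if c = C n a then (mult b (C n a) : ℝ) * (θ n / K) else 0)) :=
      tsum_congr fun c => congrFun e1 c
    rw [hwnb, e2]
    rw [Summable.tsum_add ((hS a b).mul_left _) (hSv n a b), tsum_mul_left, tsum_ite_eq,
      hC n a b]
  refine ⟨w, v, fun n => ⟨?_, hvMstar n, fun a b => rfl⟩, ?_, ?_⟩
  · intro q
    exact tsum_nonneg fun c => mul_nonneg (Nat.cast_nonneg _) (hv0 n _)
  · -- Tendsto w
    rw [tendsto_pi_nhds]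
    rintro ⟨a, b⟩
    have hsplit : ϖ (a, b) = πh a b + d a b := by rw [hd]; ring
    have h1 : Filter.Tendsto (fun n : ℕ => (1 - θ n) * πh a b) Filter.atTop
        (nhds (πh a b)) := by
      have := ((tendsto_const_nhds (x := (1:ℝ))).sub hθ0).mul_const (πh a b)
      simpa using this
    have h2 : Filter.Tendsto
        (fun n : ℕ => (⌈((n : ℝ) + 1) * K * d a b⌉₊ : ℝ) * (θ n / K)) Filter.atTop
        (nhds (d a b)) := by
      have hxnn : ∀ n : ℕ, (0:ℝ) ≤ ((n : ℝ) + 1) * K * d a b :=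
        fun n => mul_nonneg (by positivity) (hd0 a b)
      have hid : ∀ n : ℕ, (((n : ℝ) + 1) * K * d a b) * (θ n / K) = d a b := by
        intro n
        have hn1 : ((n : ℝ) + 1) ≠ 0 := by positivity
        rw [hθ]
        field_simp
      have hle1 : ∀ n : ℕ, d a b
          ≤ (⌈((n : ℝ) + 1) * K * d a b⌉₊ : ℝ) * (θ n / K) := by
        intro n
        calc d a b = (((n : ℝ) + 1) * K * d a b) * (θ n / K) := (hid n).symm
          _ ≤ (⌈((n : ℝ) + 1) * K * d a b⌉₊ : ℝ) * (θ n / K) :=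
            mul_le_mul_of_nonneg_right (Nat.le_ceil _)
              (le_of_lt (div_pos (hθpos n) hKpos))
      have hle2 : ∀ n : ℕ, (⌈((n : ℝ) + 1) * K * d a b⌉₊ : ℝ) * (θ n / K)
          ≤ d a b + θ n / K := by
        intro n
        have h := (Nat.ceil_lt_add_one (hxnn n)).le
        calc (⌈((n : ℝ) + 1) * K * d a b⌉₊ : ℝ) * (θ n / K)
            ≤ (((n : ℝ) + 1) * K * d a b + 1) * (θ n / K) :=
              mul_le_mul_of_nonneg_right h (le_of_lt (div_pos (hθpos n) hKpos))
          _ = d a b + θ n / K := by rw [add_mul, hid n, one_mul]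
      have hup : Filter.Tendsto (fun n : ℕ => d a b + θ n / K) Filter.atTop
          (nhds (d a b)) := by
        have := (hθ0.div_const K).const_add (d a b)
        simpa using this
      exact tendsto_of_tendsto_of_tendsto_of_le_of_le tendsto_const_nhds hup hle1 hle2
    have := h1.add h2
    rw [← hsplit] at this
    exact this.congr fun n => (hwval n a b).symm
  · -- Tendsto v
    rw [tendsto_pi_nhds]
    intro p
    have hbnd : ∀ n, ‖v n p - ν p‖ ≤ (|ν p| + 1 / K) * θ n := by
      intro n
      have e : v n p - ν p = -(θ n * ν p) + g n p := by rw [hv]; ring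
      rw [Real.norm_eq_abs, e]
      have h1 : |(-(θ n * ν p))| ≤ θ n * |ν p| := by
        rw [abs_neg, abs_mul, abs_of_pos (hθpos n)]
      have h2 : |g n p| ≤ θ n / K := by
        simp only [hg]
        split
        · rw [abs_of_nonneg (le_of_lt (div_pos (hθpos n) hKpos))]
        · rw [abs_zero]; exact le_of_lt (div_pos (hθpos n) hKpos)
      calc |(-(θ n * ν p)) + g n p| ≤ |(-(θ n * ν p))| + |g n p| := abs_add_le _ _
        _ ≤ θ n * |ν p| + θ n / K := add_le_add h1 h2
        _ = (|ν p| + 1 / K) * θ n := by ring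
    have hz : Filter.Tendsto (fun n : ℕ => v n p - ν p) Filter.atTop (nhds 0) := by
      refine squeeze_zero_norm hbnd ?_
      have := hθ0.const_mul (|ν p| + 1 / K)
      simpa using this
    have := hz.add (tendsto_const_nhds (x := ν p))
    simpa using this

end GWLD
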